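/- For every n ≥ 1 and every k with 0 ≤ k ≤ n, the number of permutations of [n+k] that avoid both (a-bc) and (a-cb) and have exactly n-1 descents equals the number of involutions in S_{n+k} having exactly n-k fixed points. -/

import Mathlib

/-- `π` avoids the pattern (a-bc). -/
def AvoidsAdBC (n : ℕ) (π : Equiv.Perm (Fin n)) : Prop :=
  ∀ (i j : ℕ) (hi : i < n) (hj : j + 1 < n), i < j →
    ¬ (π ⟨i, hi⟩ < π ⟨j, Nat.lt_of_succ_lt hj⟩ ∧
       π ⟨j, Nat.lt_of_succ_lt hj⟩ < π ⟨j + 1, hj⟩)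

/-- `π` avoids the pattern (a-cb). -/
def AvoidsAdCB (n : ℕ) (π : Equiv.Perm (Fin n)) : Prop :=
  ∀ (i j : ℕ) (hi : i < n) (hj : j + 1 < n), i < j →
    ¬ (π ⟨i, hi⟩ < π ⟨j + 1, hj⟩ ∧
       π ⟨j + 1, hj⟩ < π ⟨j, Nat.lt_of_succ_lt hj⟩)

/-- The number of descents of `π`: (0-based) indices `i` with `i + 1 < n` and
`π i > π (i+1)`. -/
noncomputable def des (n : ℕ) (π : Equiv.Perm (Fin n)) : ℕ :=
  {i : ℕ | ∃ h : i + 1 < n, π ⟨i + 1, h⟩ < π ⟨i, Nat.lt_of_succ_lt h⟩}.ncard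

section AuxAvoid
open Equiv

variable {m : ℕ}

/-- block minimum -/
private def bm (σ : Perm (Fin m)) (v : Fin m) : Fin m := min v (σ v)

private def Rr (σ : Perm (Fin m)) (v w : Fin m) : Prop :=
  bm σ w < bm σ v ∨ (bm σ v = bm σ w ∧ v ≤ w)

private instance (σ : Perm (Fin m)) : DecidableRel (Rr σ) := fun _ _ => by
  unfold Rr; infer_instance

private instance (σ : Perm (Fin m)) : IsTrans (Fin m) (Rr σ) := by
  constructor
  rintro a b c (h1 | ⟨h1, h1'⟩) (h2 | ⟨h2, h2'⟩)
  · exact Or.inl (h2.trans h1)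
  · exact Or.inl (h2 ▸ h1)
  · exact Or.inl (h1 ▸ h2)
  · exact Or.inr ⟨h1.trans h2, h1'.trans h2'⟩

private instance (σ : Perm (Fin m)) : IsAntisymm (Fin m) (Rr σ) := by
  constructor
  rintro a b (h1 | ⟨h1, h1'⟩) (h2 | ⟨h2, h2'⟩)
  · exact absurd (h1.trans h2) (lt_irrefl _)
  · exact absurd h1 (h2 ▸ lt_irrefl _)
  · exact absurd h2 (h1 ▸ lt_irrefl _)
  · exact le_antisymm h1' h2'

private instance (σ : Perm (Fin m)) : IsTotal (Fin m) (Rr σ) := by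
  constructor
  intro a b
  rcases lt_trichotomy (bm σ a) (bm σ b) with h | h | h
  · exact Or.inr (Or.inl h)
  · rcases le_total a b with h' | h'
    · exact Or.inl (Or.inr ⟨h, h'⟩)
    · exact Or.inr (Or.inr ⟨h.symm, h'⟩)
  · exact Or.inl (Or.inl h)

private noncomputable def sl (σ : Perm (Fin m)) : List (Fin m) :=
  Finset.sort Finset.univ (Rr σ)

private lemma sl_length (σ : Perm (Fin m)) : (sl σ).length = m := by
  simp [sl, Finset.length_sort]

private noncomputable def psi (σ : Perm (Fin m)) : Perm (Fin m) :=
  Equiv.ofBijective (fun i => (sl σ).get (finCongr (sl_length σ).symm i))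
    (Finite.injective_iff_bijective.mp
      ((List.nodup_iff_injective_get.mp (Finset.sort_nodup _ _)).comp (finCongr _).injective))

private lemma psi_apply (σ : Perm (Fin m)) (i : Fin m) :
    psi σ i = (sl σ).get (finCongr (sl_length σ).symm i) := rfl

private lemma psi_sorted (σ : Perm (Fin m)) {p q : Fin m} (h : p < q) :
    Rr σ (psi σ p) (psi σ q) := by
  rw [psi_apply, psi_apply]
  exact (Finset.pairwise_sort Finset.univ (Rr σ)).rel_get_of_lt (by simp only [Fin.lt_def, Fin.coe_cast, finCongr_apply]; exact h)


private lemma bm_eq_iff (σ : Perm (Fin m)) (hσ : ∀ x, σ (σ x) = x) {u v : Fin m}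
    (h : bm σ u = bm σ v) : u = v ∨ u = σ v := by
  rcases min_choice u (σ u) with h1 | h1 <;> rcases min_choice v (σ v) with h2 | h2 <;>
    unfold bm at h
  · exact Or.inl (by rw [← h1, h, h2])
  · exact Or.inr (by rw [← h1, h, h2])
  · right
    have h3 : σ u = v := by rw [← h1, h, h2]
    have := congrArg σ h3
    rw [hσ] at this
    rw [← this]
  · left
    have h3 : σ u = σ v := by rw [← h1, h, h2]
    have := congrArg σ h3
    rwa [hσ, hσ] at this

private lemma bm_sigma (σ : Perm (Fin m)) (hσ : ∀ x, σ (σ x) = x) (v : Fin m) :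
    bm σ (σ v) = bm σ v := by
  unfold bm; rw [hσ, min_comm]

/-- in the sorted list, a block's two elements are adjacent (min first) -/
private lemma adj (σ : Perm (Fin m)) (hσ : ∀ x, σ (σ x) = x) {v : Fin m} (h : v < σ v) :
    (((psi σ).symm (σ v) : Fin m) : ℕ) = (((psi σ).symm v : Fin m) : ℕ) + 1 := by
  set p := (psi σ).symm v with hp
  set q := (psi σ).symm (σ v) with hq
  have hpv : psi σ p = v := Equiv.apply_symm_apply _ _
  have hqv : psi σ q = σ v := Equiv.apply_symm_apply _ _
  have hbm : bm σ (σ v) = bm σ v := bm_sigma σ hσ v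
  have hne : p ≠ q := by
    intro he
    rw [he, hqv] at hpv
    exact absurd hpv h.ne'
  have hpq : p < q := by
    rcases lt_or_gt_of_ne hne with h' | h'
    · exact h'
    · exfalso
      have := psi_sorted σ h'
      rw [hpv, hqv] at this
      rcases this with h2 | ⟨h2, h2'⟩
      · rw [hbm] at h2; exact lt_irrefl _ h2
      · exact absurd h2' (not_le.mpr h)
  by_contra hcon
  have hlt : (p : ℕ) + 1 < (q : ℕ) := by
    have := Fin.lt_def.mp hpq
    omega
  set x : Fin m := psi σ ⟨(p : ℕ) + 1, lt_trans hlt q.isLt⟩ with hx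
  have h1 : Rr σ v x := by
    rw [← hpv]; exact psi_sorted σ (by rw [Fin.lt_def]; simp)
  have h2 : Rr σ x (σ v) := by
    rw [← hqv]; exact psi_sorted σ (by rw [Fin.lt_def]; simpa using hlt)
  have hxne : bm σ x ≠ bm σ v := by
    intro he
    rcases bm_eq_iff σ hσ he with h' | h'
    · rw [← hpv] at h'
      have := (psi σ).injective h'
      rw [Fin.ext_iff] at this
      simp at this
    · rw [← hqv] at h'
      have := (psi σ).injective h'
      rw [Fin.ext_iff] at this
      simp at this
      omega
  rcases h1 with h1 | ⟨h1, _⟩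
  · rcases h2 with h2 | ⟨h2, _⟩
    · rw [hbm] at h2; exact absurd (h2.trans h1) (lt_irrefl _)
    · rw [hbm] at h2; exact hxne h2
  · exact hxne h1.symm

private lemma psi_ne (σ : Perm (Fin m)) {i j : ℕ} (hi : i < m) (hj : j < m) (hij : i ≠ j) :
    psi σ ⟨i, hi⟩ ≠ psi σ ⟨j, hj⟩ := by
  intro he
  exact hij (Fin.mk.injEq .. ▸ (psi σ).injective he)

private lemma asc_or_min (σ : Perm (Fin m)) (hσ : ∀ x, σ (σ x) = x) {i : ℕ} (h : i + 1 < m) :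
    σ (psi σ ⟨i, Nat.lt_of_succ_lt h⟩) = psi σ ⟨i + 1, h⟩ ∨
      bm σ (psi σ ⟨i + 1, h⟩) = psi σ ⟨i + 1, h⟩ := by
  by_cases hmin : bm σ (psi σ ⟨i + 1, h⟩) = psi σ ⟨i + 1, h⟩
  · exact Or.inr hmin
  · left
    have h1 : bm σ (psi σ ⟨i + 1, h⟩) = σ (psi σ ⟨i + 1, h⟩) :=
      (min_choice _ _).resolve_left hmin
    have h2 : σ (psi σ ⟨i + 1, h⟩) ≠ psi σ ⟨i + 1, h⟩ := by
      intro he; exact hmin (by rw [h1, he])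
    have h3 : σ (psi σ ⟨i + 1, h⟩) < psi σ ⟨i + 1, h⟩ :=
      lt_of_le_of_ne (h1 ▸ min_le_left _ _) h2
    have h4 : σ (psi σ ⟨i + 1, h⟩) < σ (σ (psi σ ⟨i + 1, h⟩)) := by rw [hσ]; exact h3
    have h5 := adj σ hσ h4
    rw [hσ, Equiv.symm_apply_apply] at h5
    have h7 : (psi σ).symm (σ (psi σ ⟨i + 1, h⟩)) = ⟨i, Nat.lt_of_succ_lt h⟩ := by
      rw [Fin.ext_iff]; simpa using h5.symm
    have h8 : psi σ ⟨i, Nat.lt_of_succ_lt h⟩ = σ (psi σ ⟨i + 1, h⟩) := by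
      rw [← h7, Equiv.apply_symm_apply]
    rw [h8, hσ]

private lemma asc_iff (σ : Perm (Fin m)) (hσ : ∀ x, σ (σ x) = x) {i : ℕ} (h : i + 1 < m) :
    psi σ ⟨i, Nat.lt_of_succ_lt h⟩ < psi σ ⟨i + 1, h⟩ ↔
      σ (psi σ ⟨i, Nat.lt_of_succ_lt h⟩) = psi σ ⟨i + 1, h⟩ := by
  constructor
  · intro hasc
    by_contra hne
    have hminw : bm σ (psi σ ⟨i + 1, h⟩) = psi σ ⟨i + 1, h⟩ :=
      (asc_or_min σ hσ h).resolve_left hne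
    have hs : Rr σ (psi σ ⟨i, Nat.lt_of_succ_lt h⟩) (psi σ ⟨i + 1, h⟩) :=
      psi_sorted σ (by rw [Fin.lt_def]; simp)
    rcases hs with h1 | ⟨h1, _⟩
    · rw [hminw] at h1
      exact absurd hasc (not_lt.mpr (lt_of_lt_of_le h1 (min_le_left _ _)).le)
    · rcases bm_eq_iff σ hσ h1 with h' | h'
      · exact psi_ne σ _ _ (by omega) h'
      · exact hne (by rw [h', hσ])
  · intro heq
    have hne : psi σ ⟨i, Nat.lt_of_succ_lt h⟩ ≠ psi σ ⟨i + 1, h⟩ := psi_ne σ _ _ (by omega)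
    rcases lt_or_gt_of_ne hne with h' | h'
    · exact h'
    · exfalso
      have hsw : σ (psi σ ⟨i + 1, h⟩) = psi σ ⟨i, Nat.lt_of_succ_lt h⟩ := by rw [← heq, hσ]
      have h4 : psi σ ⟨i + 1, h⟩ < σ (psi σ ⟨i + 1, h⟩) := by rw [hsw]; exact h'
      have h5 := adj σ hσ h4
      rw [hsw, Equiv.symm_apply_apply, Equiv.symm_apply_apply] at h5
      simp at h5
      omega

private lemma psi_avoids_bc (σ : Perm (Fin m)) (hσ : ∀ x, σ (σ x) = x) :
    AvoidsAdBC m (psi σ) := by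
  intro i j hi hj hij hcon
  obtain ⟨h1, h2⟩ := hcon
  have heq : σ (psi σ ⟨j, Nat.lt_of_succ_lt hj⟩) = psi σ ⟨j + 1, hj⟩ := (asc_iff σ hσ hj).mp h2
  have hminj : bm σ (psi σ ⟨j, Nat.lt_of_succ_lt hj⟩) = psi σ ⟨j, Nat.lt_of_succ_lt hj⟩ := by
    unfold bm; rw [heq]; exact min_eq_left h2.le
  have hs : Rr σ (psi σ ⟨i, hi⟩) (psi σ ⟨j, Nat.lt_of_succ_lt hj⟩) :=
    psi_sorted σ (by rw [Fin.lt_def]; exact hij)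
  rcases hs with hlt | ⟨heq2, _⟩
  · rw [hminj] at hlt
    exact absurd h1 (not_lt.mpr (lt_of_lt_of_le hlt (min_le_left _ _)).le)
  · rcases bm_eq_iff σ hσ heq2 with h' | h'
    · exact psi_ne σ _ _ (by omega) h'
    · rw [heq] at h'
      exact psi_ne σ _ _ (by omega) h'

private lemma psi_avoids_cb (σ : Perm (Fin m)) (hσ : ∀ x, σ (σ x) = x) :
    AvoidsAdCB m (psi σ) := by
  intro i j hi hj hij hcon
  obtain ⟨h1, h2⟩ := hcon
  have hne : σ (psi σ ⟨j, Nat.lt_of_succ_lt hj⟩) ≠ psi σ ⟨j + 1, hj⟩ := by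
    intro he
    exact absurd ((asc_iff σ hσ hj).mpr he) (not_lt.mpr h2.le)
  have hminw : bm σ (psi σ ⟨j + 1, hj⟩) = psi σ ⟨j + 1, hj⟩ :=
    (asc_or_min σ hσ hj).resolve_left hne
  have hs : Rr σ (psi σ ⟨i, hi⟩) (psi σ ⟨j + 1, hj⟩) :=
    psi_sorted σ (by rw [Fin.lt_def]; exact Nat.lt_succ_of_lt hij)
  rcases hs with hlt | ⟨heq2, _⟩
  · rw [hminw] at hlt
    exact absurd h1 (not_lt.mpr (lt_of_lt_of_le hlt (min_le_left _ _)).le)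
  · rcases bm_eq_iff σ hσ heq2 with h' | h'
    · exact psi_ne σ _ _ (by omega) h'
    · have hsv : σ (psi σ ⟨i, hi⟩) = psi σ ⟨j + 1, hj⟩ := by rw [h', hσ]
      have h4 : psi σ ⟨i, hi⟩ < σ (psi σ ⟨i, hi⟩) := by rw [hsv]; exact h1
      have h5 := adj σ hσ h4
      rw [hsv, Equiv.symm_apply_apply, Equiv.symm_apply_apply] at h5
      simp at h5
      omega

private lemma count_fix (σ : Perm (Fin m)) (hσ : ∀ x, σ (σ x) = x) :
    2 * {v : Fin m | v < σ v}.ncard + {v : Fin m | σ v = v}.ncard = m := by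
  classical
  have hA : {v : Fin m | v < σ v} = ↑(Finset.univ.filter fun v => v < σ v) := by
    ext v; simp
  have hF : {v : Fin m | σ v = v} = ↑(Finset.univ.filter fun v => σ v = v) := by
    ext v; simp
  rw [hA, hF, Set.ncard_coe_finset, Set.ncard_coe_finset]
  set A := Finset.univ.filter fun v : Fin m => v < σ v with hA'
  set B := Finset.univ.filter fun v : Fin m => σ v < v with hB'
  set F := Finset.univ.filter fun v : Fin m => σ v = v with hF'
  have hAB : A.card = B.card := by
    apply Finset.card_bij (fun v _ => σ v)
    · intro a ha
      simp only [hA', Finset.mem_filter, Finset.mem_univ, true_and] at ha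
      simp only [hB', Finset.mem_filter, Finset.mem_univ, true_and]
      rw [hσ]; exact ha
    · intro a _ b _ hab
      exact σ.injective hab
    · intro b hb
      simp only [hB', Finset.mem_filter, Finset.mem_univ, true_and] at hb
      refine ⟨σ b, ?_, hσ b⟩
      simp only [hA', Finset.mem_filter, Finset.mem_univ, true_and]
      rw [hσ]; exact hb
  have hdisj1 : Disjoint A B := by
    rw [Finset.disjoint_left]
    intro a ha hb
    simp only [hA', hB', Finset.mem_filter, Finset.mem_univ, true_and] at ha hb
    exact absurd hb (not_lt.mpr ha.le)
  have hdisj2 : Disjoint (A ∪ B) F := by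
    rw [Finset.disjoint_left]
    intro a ha hf
    simp only [hA', hB', hF', Finset.mem_filter, Finset.mem_univ, true_and,
      Finset.mem_union] at ha hf
    rcases ha with h | h
    · rw [hf] at h; exact lt_irrefl _ h
    · exact absurd hf h.ne
  have huniv : A ∪ B ∪ F = Finset.univ := by
    ext v
    simp only [hA', hB', hF', Finset.mem_union, Finset.mem_filter, Finset.mem_univ, true_and,
      iff_true]
    rcases lt_trichotomy v (σ v) with h | h | h
    · exact Or.inl (Or.inl h)
    · exact Or.inr h.symm
    · exact Or.inl (Or.inr h)
  have hcard : A.card + B.card + F.card = m := by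
    have h1 := Finset.card_union_of_disjoint hdisj2
    have h2 := Finset.card_union_of_disjoint hdisj1
    rw [huniv] at h1
    simp only [Finset.card_univ, Fintype.card_fin] at h1
    omega
  omega

private lemma count_des (σ : Perm (Fin m)) (hσ : ∀ x, σ (σ x) = x) (hm : 0 < m) :
    des m (psi σ) + {v : Fin m | v < σ v}.ncard + 1 = m := by
  classical
  -- descent and ascent position sets
  have hdes : des m (psi σ) = ((Finset.range (m - 1)).filter fun i =>
      ∃ h : i + 1 < m, psi σ ⟨i + 1, h⟩ < psi σ ⟨i, Nat.lt_of_succ_lt h⟩).card := by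
    rw [des, ← Set.ncard_coe_finset]
    congr 1
    ext i
    simp only [Set.mem_setOf_eq, Finset.coe_filter, Finset.mem_range]
    constructor
    · rintro ⟨h, hlt⟩
      exact ⟨by omega, h, hlt⟩
    · rintro ⟨_, h, hlt⟩
      exact ⟨h, hlt⟩
  have hAval : {v : Fin m | v < σ v}.ncard = ((Finset.range (m - 1)).filter fun i =>
      ∃ h : i + 1 < m, psi σ ⟨i, Nat.lt_of_succ_lt h⟩ < psi σ ⟨i + 1, h⟩).card := by
    have hA : {v : Fin m | v < σ v} = ↑(Finset.univ.filter fun v : Fin m => v < σ v) := by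
      ext v; simp
    rw [hA, Set.ncard_coe_finset]
    refine (Finset.card_bij (fun i hi => psi σ ⟨i, by
      simp only [Finset.mem_filter, Finset.mem_range] at hi; omega⟩) ?_ ?_ ?_).symm
    · intro a ha
      simp only [Finset.mem_filter, Finset.mem_range] at ha
      obtain ⟨_, h, hlt⟩ := ha
      simp only [Finset.mem_filter, Finset.mem_univ, true_and]
      rw [(asc_iff σ hσ h).mp hlt]
      exact hlt
    · intro a ha b hb hab
      have := (psi σ).injective hab
      rw [Fin.mk.injEq] at this
      exact this
    · intro v hv
      simp only [Finset.mem_filter, Finset.mem_univ, true_and] at hv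
      have h5 := adj σ hσ hv
      have hqlt : (((psi σ).symm (σ v) : Fin m) : ℕ) < m := Fin.isLt _
      have hplt : (((psi σ).symm v : Fin m) : ℕ) + 1 < m := by omega
      refine ⟨((psi σ).symm v : Fin m), ?_, ?_⟩
      · simp only [Finset.mem_filter, Finset.mem_range]
        constructor
        · omega
        · refine ⟨hplt, ?_⟩
          have e1 : psi σ ⟨(((psi σ).symm v : Fin m) : ℕ), by omega⟩ = v := by
            rw [Fin.eta, Equiv.apply_symm_apply]
          have e2 : psi σ ⟨(((psi σ).symm v : Fin m) : ℕ) + 1, hplt⟩ = σ v := by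
            have : (⟨(((psi σ).symm v : Fin m) : ℕ) + 1, hplt⟩ : Fin m) = (psi σ).symm (σ v) := by
              apply Fin.eq_of_val_eq; simp only [Fin.val_mk]; omega
            rw [this, Equiv.apply_symm_apply]
          rw [e1, e2]
          exact hv
      · simp only [Fin.eta]
        exact Equiv.apply_symm_apply _ _
  rw [hdes, hAval]
  have hsplit := Finset.card_filter_add_card_filter_not
    (s := Finset.range (m - 1)) (p := fun i =>
      ∃ h : i + 1 < m, psi σ ⟨i + 1, h⟩ < psi σ ⟨i, Nat.lt_of_succ_lt h⟩)
  have hcompl : ((Finset.range (m - 1)).filter fun i =>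
      ¬ ∃ h : i + 1 < m, psi σ ⟨i + 1, h⟩ < psi σ ⟨i, Nat.lt_of_succ_lt h⟩) =
      ((Finset.range (m - 1)).filter fun i =>
      ∃ h : i + 1 < m, psi σ ⟨i, Nat.lt_of_succ_lt h⟩ < psi σ ⟨i + 1, h⟩) := by
    apply Finset.filter_congr
    intro i hi
    simp only [Finset.mem_range] at hi
    have h : i + 1 < m := by omega
    have hne : psi σ ⟨i, Nat.lt_of_succ_lt h⟩ ≠ psi σ ⟨i + 1, h⟩ := psi_ne σ _ _ (by omega)
    simp only [not_exists]
    constructor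
    · intro hnd
      exact ⟨h, lt_of_le_of_ne (not_lt.mp (hnd h)) hne⟩
    · rintro ⟨h', hlt⟩ h'' hd
      exact absurd hlt (not_lt.mpr hd.le)
  rw [hcompl] at hsplit
  rw [Finset.card_range] at hsplit
  omega

private lemma piApp_congr (π : Perm (Fin m)) {a b : ℕ} (ha : a < m) (hb : b < m) (h : a = b) :
    π ⟨a, ha⟩ = π ⟨b, hb⟩ := by subst h; rfl

private lemma piApp_ne (π : Perm (Fin m)) {a b : ℕ} (ha : a < m) (hb : b < m) (h : a ≠ b) :
    π ⟨a, ha⟩ ≠ π ⟨b, hb⟩ := by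
  intro he
  exact h (Fin.mk.injEq .. ▸ π.injective he)

/-- ascent at (0-based) position `i` -/
private def ascAt (π : Perm (Fin m)) (i : ℕ) : Prop :=
  ∃ h : i + 1 < m, π ⟨i, Nat.lt_of_succ_lt h⟩ < π ⟨i + 1, h⟩

private lemma ascAt_congr (π : Perm (Fin m)) {a b : ℕ} (h : a = b) :
    ascAt π a ↔ ascAt π b := by rw [h]

private lemma nca (π : Perm (Fin m)) (hbc : AvoidsAdBC m π) (i : ℕ) :
    ¬ (ascAt π i ∧ ascAt π (i + 1)) := by
  rintro ⟨⟨h1, hl1⟩, ⟨h2, hl2⟩⟩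
  exact hbc i (i + 1) (by omega) h2 (by omega) ⟨hl1, hl2⟩

open Classical in
private noncomputable def sw (π : Perm (Fin m)) (p : Fin m) : Fin m :=
  if h : ascAt π p.val then ⟨p.val + 1, h.choose⟩
  else if h2 : 0 < p.val ∧ ascAt π (p.val - 1) then ⟨p.val - 1, by omega⟩
  else p

open Classical in
private lemma sw_asc (π : Perm (Fin m)) {p : Fin m} (h : ascAt π (p : ℕ)) :
    ((sw π p : Fin m) : ℕ) = (p : ℕ) + 1 := by
  unfold sw; rw [dif_pos h]

open Classical in
private lemma sw_top (π : Perm (Fin m)) {p : Fin m} (h1 : ¬ ascAt π (p : ℕ))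
    (h2 : 0 < (p : ℕ)) (h3 : ascAt π ((p : ℕ) - 1)) :
    ((sw π p : Fin m) : ℕ) = (p : ℕ) - 1 := by
  unfold sw; rw [dif_neg h1, dif_pos ⟨h2, h3⟩]

open Classical in
private lemma sw_fix (π : Perm (Fin m)) {p : Fin m} (h1 : ¬ ascAt π (p : ℕ))
    (h2 : ¬ (0 < (p : ℕ) ∧ ascAt π ((p : ℕ) - 1))) :
    sw π p = p := by
  unfold sw; rw [dif_neg h1, dif_neg h2]

private lemma sw_invol (π : Perm (Fin m)) (hbc : AvoidsAdBC m π) (p : Fin m) :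
    sw π (sw π p) = p := by
  by_cases h : ascAt π (p : ℕ)
  · have hv : ((sw π p : Fin m) : ℕ) = (p : ℕ) + 1 := sw_asc π h
    have h1 : ¬ ascAt π ((sw π p : Fin m) : ℕ) := by
      rw [hv]; exact fun ha => nca π hbc p ⟨h, ha⟩
    have h2 : 0 < ((sw π p : Fin m) : ℕ) := by omega
    have h3 : ascAt π (((sw π p : Fin m) : ℕ) - 1) := by
      rwa [ascAt_congr π (by omega : ((sw π p : Fin m) : ℕ) - 1 = (p : ℕ))]
    apply Fin.eq_of_val_eq
    rw [sw_top π h1 h2 h3]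
    omega
  · by_cases h2 : 0 < (p : ℕ) ∧ ascAt π ((p : ℕ) - 1)
    · have hv : ((sw π p : Fin m) : ℕ) = (p : ℕ) - 1 := sw_top π h h2.1 h2.2
      have h3 : ascAt π ((sw π p : Fin m) : ℕ) := by
        rw [ascAt_congr π hv]; exact h2.2
      apply Fin.eq_of_val_eq
      rw [sw_asc π h3]
      omega
    · rw [sw_fix π h h2, sw_fix π h h2]

private noncomputable def sigmaOf (π : Perm (Fin m)) (hbc : AvoidsAdBC m π) : Perm (Fin m) where
  toFun v := π (sw π (π.symm v))
  invFun v := π (sw π (π.symm v))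
  left_inv v := by simp [sw_invol π hbc]
  right_inv v := by simp [sw_invol π hbc]

private lemma sigma_on (π : Perm (Fin m)) (hbc : AvoidsAdBC m π) (x : Fin m) :
    sigmaOf π hbc (π x) = π (sw π x) := by
  show π (sw π (π.symm (π x))) = π (sw π x)
  rw [Equiv.symm_apply_apply]

private lemma sigma_invol (π : Perm (Fin m)) (hbc : AvoidsAdBC m π) (v : Fin m) :
    sigmaOf π hbc (sigmaOf π hbc v) = v := by
  show π (sw π (π.symm (π (sw π (π.symm v))))) = v
  rw [Equiv.symm_apply_apply, sw_invol π hbc, Equiv.apply_symm_apply]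

private lemma ltr (π : Perm (Fin m)) (hcb : AvoidsAdCB m π) {t s : ℕ} (ht : t < m) (hs : s < t)
    (htop : ¬ (0 < t ∧ ascAt π (t - 1))) : π ⟨t, ht⟩ < π ⟨s, hs.trans ht⟩ := by
  have h0 : 0 < t := by omega
  have hna : ¬ ascAt π (t - 1) := fun ha => htop ⟨h0, ha⟩
  have ht1 : (t - 1) + 1 < m := by omega
  have hd : π ⟨t, ht⟩ < π ⟨t - 1, by omega⟩ := by
    rcases lt_trichotomy (π ⟨t - 1, by omega⟩) (π ⟨t, ht⟩) with hlt | heq | hgt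
    · exact absurd ⟨ht1, by rwa [piApp_congr π ht1 ht (by omega)]⟩ hna
    · exact absurd heq (piApp_ne π _ _ (by omega))
    · exact hgt
  rcases Nat.lt_or_ge s (t - 1) with hs' | hs'
  · have hcon := hcb s (t - 1) (by omega) ht1 hs'
    have he : π ⟨(t - 1) + 1, ht1⟩ = π ⟨t, ht⟩ := piApp_congr π ht1 ht (by omega)
    rw [he] at hcon
    rcases lt_trichotomy (π ⟨s, hs.trans ht⟩) (π ⟨t, ht⟩) with hlt | heq | hgt
    · exact absurd ⟨hlt, hd⟩ hcon
    · exact absurd heq.symm (piApp_ne π _ _ (by omega))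
    · exact hgt
  · have hse : s = t - 1 := by omega
    rw [piApp_congr π (hs.trans ht) (by omega : t - 1 < m) hse]
    exact hd

private lemma bm_asc (π : Perm (Fin m)) (hbc : AvoidsAdBC m π) {t : ℕ} (ht : t < m)
    (h : ascAt π t) : bm (sigmaOf π hbc) (π ⟨t, ht⟩) = π ⟨t, ht⟩ := by
  obtain ⟨h1, hlt⟩ := h
  have hsw : sw π ⟨t, ht⟩ = ⟨t + 1, h1⟩ := by
    apply Fin.eq_of_val_eq
    rw [sw_asc π (p := ⟨t, ht⟩) ⟨h1, hlt⟩]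
  unfold bm
  rw [sigma_on, hsw]
  exact min_eq_left hlt.le

private lemma bm_pi (π : Perm (Fin m)) (hbc : AvoidsAdBC m π) {t : ℕ} (ht : t < m) :
    ∃ t', ∃ ht' : t' < m, bm (sigmaOf π hbc) (π ⟨t, ht⟩) = π ⟨t', ht'⟩ ∧
      ¬ (0 < t' ∧ ascAt π (t' - 1)) ∧ (t' = t ∨ (t' = t - 1 ∧ 0 < t ∧ ascAt π (t - 1))) := by
  by_cases h : ascAt π t
  · refine ⟨t, ht, bm_asc π hbc ht h, ?_, Or.inl rfl⟩
    rintro ⟨h0, ha⟩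
    exact nca π hbc (t - 1) ⟨ha, by rwa [ascAt_congr π (by omega : t - 1 + 1 = t)]⟩
  · by_cases h2 : 0 < t ∧ ascAt π (t - 1)
    · obtain ⟨h0, ha⟩ := h2
      obtain ⟨ha1, halt⟩ := ha
      have hsw : sw π ⟨t, ht⟩ = ⟨t - 1, by omega⟩ := by
        apply Fin.eq_of_val_eq
        rw [sw_top π (p := ⟨t, ht⟩) h h0 ⟨ha1, halt⟩]
      refine ⟨t - 1, by omega, ?_, ?_, Or.inr ⟨rfl, h0, ha1, halt⟩⟩
      · unfold bm
        rw [sigma_on, hsw]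
        have hlt2 : π ⟨t - 1, by omega⟩ < π ⟨t, ht⟩ := by
          rw [← piApp_congr π ha1 ht (by omega : t - 1 + 1 = t)]
          exact halt
        exact min_eq_right hlt2.le
      · rintro ⟨h0', ha'⟩
        exact nca π hbc (t - 1 - 1)
          ⟨ha', by rw [ascAt_congr π (by omega : t - 1 - 1 + 1 = t - 1)]; exact ⟨ha1, halt⟩⟩
    · have hsw : sw π ⟨t, ht⟩ = ⟨t, ht⟩ := sw_fix π (p := ⟨t, ht⟩) h h2
      refine ⟨t, ht, ?_, h2, Or.inl rfl⟩
      unfold bm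
      rw [sigma_on, hsw]
      exact min_self _

private lemma sorted_ofPi (π : Perm (Fin m)) (hbc : AvoidsAdBC m π) (hcb : AvoidsAdCB m π)
    {p q : ℕ} (hq : q < m) (hpq : p < q) :
    Rr (sigmaOf π hbc) (π ⟨p, hpq.trans hq⟩) (π ⟨q, hq⟩) := by
  have hp : p < m := hpq.trans hq
  by_cases hbm : bm (sigmaOf π hbc) (π ⟨p, hp⟩) = bm (sigmaOf π hbc) (π ⟨q, hq⟩)
  · rcases bm_eq_iff _ (sigma_invol π hbc) hbm with he | he
    · exact absurd he (piApp_ne π _ _ (by omega))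
    · rw [sigma_on] at he
      have hpe : (⟨p, hp⟩ : Fin m) = sw π ⟨q, hq⟩ := π.injective he
      by_cases hq1 : ascAt π q
      · exfalso
        have hv := sw_asc π (p := ⟨q, hq⟩) hq1
        rw [← hpe] at hv
        simp at hv
        omega
      · by_cases hq2 : 0 < q ∧ ascAt π (q - 1)
        · have hv := sw_top π (p := ⟨q, hq⟩) hq1 hq2.1 hq2.2
          rw [← hpe] at hv
          simp at hv
          have ha := hq2.2
          rw [ascAt_congr π (show q - 1 = p by omega)] at ha
          obtain ⟨h1, hlt⟩ := ha
          right
          refine ⟨hbm, ?_⟩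
          have he2 : π ⟨p + 1, h1⟩ = π ⟨q, hq⟩ := piApp_congr π h1 hq (by omega)
          rw [← he2]
          exact hlt.le
        · have hv := sw_fix π (p := ⟨q, hq⟩) hq1 hq2
          rw [← hpe] at hv
          exact absurd hv (by intro hh; rw [Fin.ext_iff] at hh; simp at hh; omega)
  · left
    obtain ⟨q', hq', hbq, htopq, hcase⟩ := bm_pi π hbc hq
    obtain ⟨p', hp', hbp, _, hcasep⟩ := bm_pi π hbc hp
    have hp'le : p' ≤ p := by rcases hcasep with h | ⟨h, _⟩ <;> omega
    have hpq' : p' < q' := by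
      rcases hcase with h | ⟨h, h0, ha⟩
      · omega
      · rcases Nat.lt_or_ge p' (q - 1) with hl | hl
        · omega
        · exfalso
          have hap : ascAt π p := by
            rwa [ascAt_congr π (show q - 1 = p by omega)] at ha
          have hba : bm (sigmaOf π hbc) (π ⟨p, hp⟩) = π ⟨p, hp⟩ := bm_asc π hbc hp hap
          rw [hba, hbq] at hbm
          exact hbm (piApp_congr π hp hq' (by omega))
    rw [hbq, hbp]
    exact ltr π hcb hq' hpq' htopq

private lemma psi_sigmaOf (π : Perm (Fin m)) (hbc : AvoidsAdBC m π) (hcb : AvoidsAdCB m π) :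
    psi (sigmaOf π hbc) = π := by
  have hM : List.Pairwise (Rr (sigmaOf π hbc)) (List.ofFn (⇑π)) := by
    rw [List.pairwise_ofFn]
    intro i j hij
    have := sorted_ofPi π hbc hcb j.isLt (show (i : ℕ) < (j : ℕ) from hij)
    simpa [Fin.eta] using this
  have hperm : (sl (sigmaOf π hbc)).Perm (List.ofFn (⇑π)) := by
    apply List.perm_of_nodup_nodup_toFinset_eq (Finset.sort_nodup _ _)
      (List.nodup_ofFn.mpr π.injective)
    ext x
    simp [sl, Finset.mem_sort, List.mem_ofFn]
    exact π.surjective x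
  have heq : sl (sigmaOf π hbc) = List.ofFn (⇑π) :=
    hperm.eq_of_pairwise' (Finset.pairwise_sort _ _) hM
  apply Equiv.ext
  intro i
  rw [psi_apply, List.get_of_eq heq]
  rw [List.get_ofFn]
  exact congrArg π (Fin.eq_of_val_eq (by simp))

private lemma recover (σ σ' : Perm (Fin m)) (hσ : ∀ x, σ (σ x) = x) (hσ' : ∀ x, σ' (σ' x) = x)
    (h : psi σ = psi σ') {v : Fin m} (hv : v < σ v) : σ' v = σ v := by
  have h5 := adj σ hσ hv
  obtain ⟨pv, hpv⟩ : ∃ pv, (((psi σ).symm v : Fin m) : ℕ) = pv := ⟨_, rfl⟩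
  rw [hpv] at h5
  have hplt : pv + 1 < m := by
    have := Fin.isLt ((psi σ).symm (σ v)); omega
  have e1 : psi σ ⟨pv, Nat.lt_of_succ_lt hplt⟩ = v := by
    have he : (⟨pv, Nat.lt_of_succ_lt hplt⟩ : Fin m) = (psi σ).symm v :=
      Fin.eq_of_val_eq (by simp only [Fin.val_mk]; omega)
    rw [he, Equiv.apply_symm_apply]
  have e2 : psi σ ⟨pv + 1, hplt⟩ = σ v := by
    have he : (⟨pv + 1, hplt⟩ : Fin m) = (psi σ).symm (σ v) :=
      Fin.eq_of_val_eq (by simp only [Fin.val_mk]; omega)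
    rw [he, Equiv.apply_symm_apply]
  have hasc : psi σ ⟨pv, Nat.lt_of_succ_lt hplt⟩ < psi σ ⟨pv + 1, hplt⟩ := by
    rw [e1, e2]; exact hv
  rw [h] at hasc
  have hr := (asc_iff σ' hσ' hplt).mp hasc
  rw [← h, e1, e2] at hr
  exact hr

private lemma psi_inj (σ σ' : Perm (Fin m)) (hσ : ∀ x, σ (σ x) = x) (hσ' : ∀ x, σ' (σ' x) = x)
    (h : psi σ = psi σ') : σ = σ' := by
  apply Equiv.ext
  intro v
  rcases lt_trichotomy v (σ v) with h1 | h1 | h1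
  · exact (recover σ σ' hσ hσ' h h1).symm
  · rcases lt_trichotomy v (σ' v) with h2 | h2 | h2
    · exact recover σ' σ hσ' hσ h.symm h2
    · rw [← h1, ← h2]
    · have h3 : σ' v < σ' (σ' v) := by rw [hσ']; exact h2
      have h4 := recover σ' σ hσ' hσ h.symm h3
      rw [hσ'] at h4
      have h6 := congrArg σ h4
      rw [hσ] at h6
      exact h6.symm
  · have h3 : σ v < σ (σ v) := by rw [hσ]; exact h1
    have h4 := recover σ σ' hσ hσ' h h3
    rw [hσ] at h4
    have h6 := congrArg σ' h4
    rw [hσ'] at h6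
    exact h6

end AuxAvoid

/-- The number of permutations of `[n+k]` avoiding both (a-bc) and (a-cb) with
exactly `n - 1` descents equals the number of involutions in `S_{n+k}` with exactly
`n - k` fixed points. -/
theorem avoid_des_eq_involutions_fixed_points (n k : ℕ) (hn : 1 ≤ n) (hk : k ≤ n) :
    {π : Equiv.Perm (Fin (n + k)) |
        AvoidsAdBC (n + k) π ∧ AvoidsAdCB (n + k) π ∧ des (n + k) π = n - 1}.ncard =
      {σ : Equiv.Perm (Fin (n + k)) |
        σ * σ = 1 ∧ {i : Fin (n + k) | σ i = i}.ncard = n - k}.ncard := by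
  have himg : {π : Equiv.Perm (Fin (n + k)) |
      AvoidsAdBC (n + k) π ∧ AvoidsAdCB (n + k) π ∧ des (n + k) π = n - 1} =
      psi '' {σ : Equiv.Perm (Fin (n + k)) |
        σ * σ = 1 ∧ {i : Fin (n + k) | σ i = i}.ncard = n - k} := by
    apply Set.Subset.antisymm
    · intro π hπ
      obtain ⟨hbc, hcb, hdes⟩ := hπ
      refine ⟨sigmaOf π hbc, ⟨?_, ?_⟩, psi_sigmaOf π hbc hcb⟩
      · apply Equiv.ext
        intro v
        rw [Equiv.Perm.mul_apply, Equiv.Perm.one_apply]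
        exact sigma_invol π hbc v
      · have hd := count_des (sigmaOf π hbc) (sigma_invol π hbc) (by omega)
        have hf := count_fix (sigmaOf π hbc) (sigma_invol π hbc)
        rw [psi_sigmaOf π hbc hcb, hdes] at hd
        omega
    · rintro _ ⟨σ, ⟨hinv, hfix⟩, rfl⟩
      have hσ : ∀ x, σ (σ x) = x := fun x => by
        have := Equiv.ext_iff.mp hinv x
        rwa [Equiv.Perm.mul_apply, Equiv.Perm.one_apply] at this
      refine ⟨psi_avoids_bc σ hσ, psi_avoids_cb σ hσ, ?_⟩
      have hd := count_des σ hσ (by omega)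
      have hf := count_fix σ hσ
      rw [hfix] at hf
      omega
  rw [himg]
  apply Set.ncard_image_of_injOn
  intro σ1 h1 σ2 h2 he
  have hσ1 : ∀ x, σ1 (σ1 x) = x := fun x => by
    have := Equiv.ext_iff.mp h1.1 x
    rwa [Equiv.Perm.mul_apply, Equiv.Perm.one_apply] at this
  have hσ2 : ∀ x, σ2 (σ2 x) = x := fun x => by
    have := Equiv.ext_iff.mp h2.1 x
    rwa [Equiv.Perm.mul_apply, Equiv.Perm.one_apply] at this
  exact psi_inj σ1 σ2 hσ1 hσ2 he
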